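/- Let T > 0, a > 0 and ω ∈ ℝ with ω ≠ 0. Then for every Δ with 0 < Δ < 2aT/(T²ω² + 1), the complex modulus satisfies |a / (a − T ω² Δ + i ω Δ)| > 1. That is, at each finite vehicle-discretization step Δ below the explicit threshold 2aT/(T²ω²+1), the one-step amplification factor of a frequency-ω disturbance in Phillips' car-following model strictly exceeds 1. -/

import Mathlib

/-- At every finite vehicle-discretization step `Δ` below the threshold
`2aT/(T²ω² + 1)`, the one-step amplification factor of a frequency-`ω`
disturbance in Phillips' car-following model strictly exceeds 1. -/
theorem phillips_one_step_amplification (T a ω : ℝ) (hT : 0 < T) (ha : 0 < a) (hω : ω ≠ 0) :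
    ∀ Δ : ℝ, 0 < Δ → Δ < 2 * a * T / (T ^ 2 * ω ^ 2 + 1) →
      1 < ‖((a : ℂ) /
        (((a - T * ω ^ 2 * Δ : ℝ) : ℂ) + ((ω * Δ : ℝ) : ℂ) * Complex.I))‖ := by
  intro Δ hΔ hlt
  have hden : (0:ℝ) < T ^ 2 * ω ^ 2 + 1 := by positivity
  have hkey : Δ * (T ^ 2 * ω ^ 2 + 1) < 2 * a * T := by
    have := (lt_div_iff₀ hden).mp hlt
    linarith
  set z : ℂ := ((a - T * ω ^ 2 * Δ : ℝ) : ℂ) + ((ω * Δ : ℝ) : ℂ) * Complex.I with hz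
  have habs2 : ‖z‖ ^ 2 = (a - T * ω ^ 2 * Δ) ^ 2 + (ω * Δ) ^ 2 := by
    rw [hz, Complex.sq_norm, Complex.normSq_add_mul_I]
  have hlt2 : (a - T * ω ^ 2 * Δ) ^ 2 + (ω * Δ) ^ 2 < a ^ 2 := by
    have hω2 : 0 < ω ^ 2 := by positivity
    nlinarith [mul_pos hω2 hΔ, mul_lt_mul_of_pos_left hkey (mul_pos hω2 hΔ)]
  have habslt : ‖z‖ < a := by
    have h1 : ‖z‖ ^ 2 < a ^ 2 := by rw [habs2]; exact hlt2
    exact lt_of_pow_lt_pow_left₀ 2 ha.le h1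
  have hzpos : 0 < ‖z‖ := by
    rcases eq_or_lt_of_le (norm_nonneg z) with h | h
    · exfalso
      have : ‖z‖ ^ 2 = 0 := by rw [← h]; ring
      rw [habs2] at this
      have : ω * Δ = 0 := by nlinarith [sq_nonneg (a - T * ω ^ 2 * Δ), sq_nonneg (ω * Δ)]
      exact (mul_ne_zero hω hΔ.ne') this
    · exact h
  rw [norm_div]
  rw [Complex.norm_real, Real.norm_eq_abs, abs_of_pos ha]
  rw [lt_div_iff₀ hzpos, one_mul]
  exact habslt
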